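/- Under the MWU update l_{t+1}(i) = l_t(i)·exp(μ_t⟨e_i, d_{π_t}⟩)/Z_t with the agent playing the equilibrium strategy d_{π*} at round 2k−1, the relative entropy to an adversary equilibrium l* does not increase in that round: RE(l*‖l_{2k}) − RE(l*‖l_{2k−1}) ≤ 0. -/
import Mathlib


open Real

noncomputable def dot {n : ℕ} (x y : Fin n → ℝ) : ℝ := ∑ i, x i * y i

/-- One MWU step taken while the agent plays the equilibrium distribution d_{π*} does not
increase the relative entropy to an adversary equilibrium l*. -/
theorem stmt_15 {n : ℕ} (q lstar dstar : Fin n → ℝ)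
    (hq : q ∈ stdSimplex ℝ (Fin n)) (hlstar : lstar ∈ stdSimplex ℝ (Fin n))
    (μ v : ℝ) (hμ : 0 ≤ μ)
    (hv1 : ∀ p ∈ stdSimplex ℝ (Fin n), dot p dstar ≤ v)
    (hv2 : v ≤ dot lstar dstar)
    (q' : Fin n → ℝ)
    (hq' : ∀ i, q' i = q i * Real.exp (μ * dstar i) / ∑ j, q j * Real.exp (μ * dstar j)) :
    (∑ i, lstar i * Real.log (lstar i / q' i))
      - (∑ i, lstar i * Real.log (lstar i / q i)) ≤ 0 := by
  obtain ⟨hq0, hq1⟩ := hq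
  obtain ⟨hl0, hl1⟩ := hlstar
  set Z : ℝ := ∑ j, q j * Real.exp (μ * dstar j) with hZdef
  have hd : ∀ i, dstar i ≤ v := by
    intro i
    have hp : (fun j => if j = i then (1:ℝ) else 0) ∈ stdSimplex ℝ (Fin n) := by
      refine ⟨fun j => ?_, by simp⟩
      by_cases h : j = i <;> simp [h]
    have := hv1 _ hp
    simpa [dot] using this
  have hZpos : 0 < Z := by
    have hex : ∃ j, 0 < q j := by
      by_contra h
      push_neg at h
      have : (∑ j, q j) ≤ 0 := Finset.sum_nonpos (fun j _ => h j)
      linarith [hq1]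
    obtain ⟨j, hj⟩ := hex
    exact Finset.sum_pos' (fun k _ => mul_nonneg (hq0 k) (Real.exp_pos _).le)
      ⟨j, Finset.mem_univ j, mul_pos hj (Real.exp_pos _)⟩
  have hZle : Real.log Z ≤ μ * v := by
    have hZle' : Z ≤ Real.exp (μ * v) := by
      calc Z ≤ ∑ j, q j * Real.exp (μ * v) := by
              refine Finset.sum_le_sum (fun j _ => ?_)
              have : μ * dstar j ≤ μ * v := mul_le_mul_of_nonneg_left (hd j) hμ
              exact mul_le_mul_of_nonneg_left (Real.exp_le_exp.2 this) (hq0 j)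
        _ = Real.exp (μ * v) := by rw [← Finset.sum_mul, hq1, one_mul]
    exact (Real.log_le_iff_le_exp hZpos).2 hZle'
  have key : ∀ i, lstar i * Real.log (lstar i / q' i) - lstar i * Real.log (lstar i / q i)
      ≤ lstar i * (μ * (v - dstar i)) := by
    intro i
    have hrhs : 0 ≤ lstar i * (μ * (v - dstar i)) := by
      have h1 := hd i
      have h2 := hl0 i
      have : 0 ≤ v - dstar i := by linarith
      exact mul_nonneg h2 (mul_nonneg hμ this)
    rcases eq_or_lt_of_le (hl0 i) with h | hlpos
    · simp [← h]
    rcases eq_or_lt_of_le (hq0 i) with h | hqpos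
    · have hq'0 : q' i = 0 := by rw [hq' i, ← h]; simp
      rw [hq'0, ← h]
      simpa using hrhs
    · have hq'pos : 0 < q' i := by
        rw [hq' i]
        positivity
      have hlog : Real.log (lstar i / q' i) - Real.log (lstar i / q i)
          = Real.log Z - μ * dstar i := by
        rw [Real.log_div hlpos.ne' hq'pos.ne', Real.log_div hlpos.ne' hqpos.ne',
          hq' i, Real.log_div (by positivity) hZpos.ne', Real.log_mul hqpos.ne'
          (Real.exp_ne_zero _), Real.log_exp]
        ring
      calc lstar i * Real.log (lstar i / q' i) - lstar i * Real.log (lstar i / q i)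
          = lstar i * (Real.log Z - μ * dstar i) := by rw [← mul_sub, hlog]
        _ ≤ lstar i * (μ * v - μ * dstar i) := by
              apply mul_le_mul_of_nonneg_left _ (hl0 i)
              linarith
        _ = lstar i * (μ * (v - dstar i)) := by ring
  calc (∑ i, lstar i * Real.log (lstar i / q' i))
      - (∑ i, lstar i * Real.log (lstar i / q i))
      = ∑ i, (lstar i * Real.log (lstar i / q' i) - lstar i * Real.log (lstar i / q i)) := by
        rw [Finset.sum_sub_distrib]
    _ ≤ ∑ i, lstar i * (μ * (v - dstar i)) := Finset.sum_le_sum (fun i _ => key i)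
    _ = μ * (v - dot lstar dstar) := by
        have h : ∑ i, lstar i * (μ * (v - dstar i))
            = μ * v * (∑ i, lstar i) - μ * ∑ i, lstar i * dstar i := by
          rw [Finset.mul_sum, Finset.mul_sum, ← Finset.sum_sub_distrib]
          exact Finset.sum_congr rfl fun i _ => by ring
        rw [h, hl1, dot]; ring
    _ ≤ 0 := by
        have : 0 ≤ dot lstar dstar - v := by linarith
        nlinarith
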